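/- arXiv:1802.01541 — 2 statements merged into one kernel-verified Lean document; each statement's English description precedes it below -/
import Mathlib

section
/- Let N, N_r, p, q be natural numbers with p + q ≤ N_r ≤ N. The number of (p+q)-tuples k with k_1,...,k_p ∈ {1,...,N}, k_{p+1},...,k_{p+q} ∈ {1,...,N_r}, and all entries pairwise distinct, equals (∏_{i=0}^{q-1} (N_r − i)) · (∏_{j=q}^{p+q-1} (N − j)). -/
open Finset

def splitFun (N Nr p q : ℕ)
    (gh : Σ g : Fin q ↪ ↥(Finset.Icc 1 Nr),
      Fin p ↪ ↥((Finset.Icc 1 N) \ (Finset.univ.image fun j => ((g j : ℕ))))) :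
    Fin (p + q) → ℕ := fun i =>
  if hi : (i : ℕ) < p then (gh.2 ⟨i, hi⟩ : ℕ)
  else (gh.1 ⟨(i : ℕ) - p, by have := i.isLt; omega⟩ : ℕ)

lemma splitFun_pos (N Nr p q : ℕ) (gh) (i : Fin (p + q)) (hi : (i : ℕ) < p) :
    splitFun N Nr p q gh i = (gh.2 ⟨i, hi⟩ : ℕ) := dif_pos hi

lemma splitFun_neg (N Nr p q : ℕ) (gh) (i : Fin (p + q)) (hi : ¬ (i : ℕ) < p) :
    splitFun N Nr p q gh i
      = (gh.1 ⟨(i : ℕ) - p, by have := i.isLt; omega⟩ : ℕ) := dif_neg hi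

def tupleOfSplit (N Nr p q : ℕ)
    (gh : Σ g : Fin q ↪ ↥(Finset.Icc 1 Nr),
      Fin p ↪ ↥((Finset.Icc 1 N) \ (Finset.univ.image fun j => ((g j : ℕ))))) :
    {k : Fin (p + q) → ℕ //
      (∀ i : Fin (p + q), (i : ℕ) < p → k i ∈ Finset.Icc 1 N) ∧
      (∀ i : Fin (p + q), p ≤ (i : ℕ) → k i ∈ Finset.Icc 1 Nr) ∧
      Function.Injective k} := by
  refine ⟨splitFun N Nr p q gh, ?_, ?_, ?_⟩
  · intro i hi
    rw [splitFun_pos N Nr p q gh i hi]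
    exact (Finset.mem_sdiff.mp (gh.2 ⟨i, hi⟩).2).1
  · intro i hi
    rw [splitFun_neg N Nr p q gh i (by omega)]
    exact (gh.1 _).2
  · intro i1 i2 h
    by_cases h1 : (i1 : ℕ) < p <;> by_cases h2 : (i2 : ℕ) < p
    · rw [splitFun_pos N Nr p q gh i1 h1, splitFun_pos N Nr p q gh i2 h2] at h
      have h' := gh.2.injective (Subtype.ext h)
      have := congrArg Fin.val h'
      exact Fin.ext (by simpa using this)
    · rw [splitFun_pos N Nr p q gh i1 h1, splitFun_neg N Nr p q gh i2 h2] at h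
      exfalso
      have hmem : ((gh.2 ⟨i1, h1⟩ : ℕ)) ∈ Finset.univ.image fun j => ((gh.1 j : ℕ)) := by
        rw [h]; exact Finset.mem_image_of_mem _ (Finset.mem_univ _)
      exact (Finset.mem_sdiff.mp (gh.2 ⟨i1, h1⟩).2).2 hmem
    · rw [splitFun_neg N Nr p q gh i1 h1, splitFun_pos N Nr p q gh i2 h2] at h
      exfalso
      have hmem : ((gh.2 ⟨i2, h2⟩ : ℕ)) ∈ Finset.univ.image fun j => ((gh.1 j : ℕ)) := by
        rw [← h]; exact Finset.mem_image_of_mem _ (Finset.mem_univ _)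
      exact (Finset.mem_sdiff.mp (gh.2 ⟨i2, h2⟩).2).2 hmem
    · rw [splitFun_neg N Nr p q gh i1 h1, splitFun_neg N Nr p q gh i2 h2] at h
      have h' := gh.1.injective (Subtype.ext h)
      have := congrArg Fin.val h'
      simp only at this
      exact Fin.ext (by omega)

lemma tupleOfSplit_bijective (N Nr p q : ℕ) :
    Function.Bijective (tupleOfSplit N Nr p q) := by
  constructor
  · rintro ⟨g, h⟩ ⟨g', h'⟩ heq
    have hfun : splitFun N Nr p q ⟨g, h⟩ = splitFun N Nr p q ⟨g', h'⟩ :=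
      congrArg Subtype.val heq
    have hg : g = g' := by
      ext j
      have hj := congrFun hfun ⟨p + (j : ℕ), by have := j.isLt; omega⟩
      rw [splitFun_neg N Nr p q _ _ (by simp), splitFun_neg N Nr p q _ _ (by simp)] at hj
      simpa using hj
    subst hg
    have hh : h = h' := by
      ext i
      have hi := congrFun hfun ⟨(i : ℕ), by have := i.isLt; omega⟩
      rw [splitFun_pos N Nr p q _ _ i.isLt, splitFun_pos N Nr p q _ _ i.isLt] at hi
      simpa using hi
    rw [hh]
  · rintro ⟨f, h1, h2, hinj⟩
    refine ⟨⟨⟨fun j => ⟨f ⟨p + (j : ℕ), by have := j.isLt; omega⟩,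
        h2 _ (Nat.le_add_right p j)⟩, ?_⟩,
      ⟨fun i => ⟨f ⟨(i : ℕ), by have := i.isLt; omega⟩, ?_⟩, ?_⟩⟩, ?_⟩
    · intro j1 j2 hj
      have := congrArg Fin.val (hinj (Subtype.ext_iff.mp hj))
      simp only at this
      exact Fin.ext (by omega)
    · refine Finset.mem_sdiff.mpr ⟨h1 _ i.isLt, ?_⟩
      intro hmem
      obtain ⟨j, -, hj⟩ := Finset.mem_image.mp hmem
      have := congrArg Fin.val (hinj hj)
      simp only at this
      have := i.isLt
      omega
    · intro i1 i2 hi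
      have := congrArg Fin.val (hinj (Subtype.ext_iff.mp hi))
      simp only at this
      exact Fin.ext (by omega)
    · apply Subtype.ext
      funext i
      change splitFun N Nr p q _ i = f i
      by_cases hi : (i : ℕ) < p
      · rw [splitFun_pos N Nr p q _ i hi]
        rfl
      · rw [splitFun_neg N Nr p q _ i hi]
        exact congrArg f (Fin.ext (by simp; omega))

/-- The number of (p+q)-tuples `k` with the first `p` entries in `{1,...,N}`,
the last `q` entries in `{1,...,N_r}`, and all entries pairwise distinct, equals
`(∏_{i=0}^{q-1} (N_r − i)) · (∏_{j=q}^{p+q-1} (N − j))`. -/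
theorem distinct_tuple_count (N Nr p q : ℕ) (hpq : p + q ≤ Nr) (hNr : Nr ≤ N) :
    Nat.card {k : Fin (p + q) → ℕ //
      (∀ i : Fin (p + q), (i : ℕ) < p → k i ∈ Finset.Icc 1 N) ∧
      (∀ i : Fin (p + q), p ≤ (i : ℕ) → k i ∈ Finset.Icc 1 Nr) ∧
      Function.Injective k} =
    (∏ i ∈ Finset.range q, (Nr - i)) * ∏ j ∈ Finset.Ico q (p + q), (N - j) := by
  classical
  rw [← Nat.card_eq_of_bijective _ (tupleOfSplit_bijective N Nr p q)]
  rw [Nat.card_eq_fintype_card, Fintype.card_sigma]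
  have hBcard : Fintype.card ↥(Finset.Icc 1 Nr) = Nr := by
    rw [Fintype.card_coe, Nat.card_Icc]; omega
  have hfiber : ∀ g : Fin q ↪ ↥(Finset.Icc 1 Nr),
      Fintype.card (Fin p ↪ ↥((Finset.Icc 1 N) \ (Finset.univ.image fun j => ((g j : ℕ)))))
        = (N - q).descFactorial p := by
    intro g
    rw [Fintype.card_embedding_eq, Fintype.card_fin, Fintype.card_coe]
    congr 1
    have hsub : (Finset.univ.image fun j => ((g j : ℕ))) ⊆ Finset.Icc 1 N := by
      intro x hx
      obtain ⟨j, -, hj⟩ := Finset.mem_image.mp hx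
      have := (g j).2
      rw [Finset.mem_Icc] at this ⊢
      omega
    have hinj' : Function.Injective (fun j : Fin q => ((g j : ℕ))) :=
      fun a b hab => g.injective (Subtype.ext hab)
    rw [Finset.card_sdiff_of_subset hsub, Finset.card_image_of_injective _ hinj', Finset.card_univ,
      Fintype.card_fin, Nat.card_Icc]
    omega
  simp only [hfiber, Finset.sum_const, Finset.card_univ, Fintype.card_embedding_eq,
    Fintype.card_fin, hBcard, smul_eq_mul]
  rw [Nat.descFactorial_eq_prod_range, Nat.descFactorial_eq_prod_range]
  congr 1
  rw [Finset.prod_Ico_eq_prod_range]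
  rw [Nat.add_sub_cancel]
  exact Finset.prod_congr rfl fun i _ => by omega
end

section
/- Let C and Ĉ be m × m real symmetric matrices with eigenvalues listed in decreasing order, and let A, Â ∈ R^{m×n} contain orthonormal eigenvectors for the top n eigenvalues of C and Ĉ respectively. Suppose the spectral gap δ = λ_n(C) − λ_{n+1}(C) > 0 and ‖C − Ĉ‖_2 ≤ δ/5. Then dist(A, Â) = ‖AAᵀ − ÂÂᵀ‖_2 ≤ (4/δ) ‖Bᵀ (C − Ĉ) A‖_2, where B ∈ R^{m×(m−n)} contains the remaining orthonormal eigenvectors of C. -/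
-- chunk 2 (appended conceptually after a.lean content)
open Matrix
open scoped Matrix.Norms.L2Operator

namespace EPB
variable {p q r : ℕ}

noncomputable def mv (M : Matrix (Fin p) (Fin q) ℝ) (x : EuclideanSpace ℝ (Fin q)) : EuclideanSpace ℝ (Fin p) :=
  (WithLp.equiv 2 (Fin p → ℝ)).symm (M *ᵥ (WithLp.equiv 2 (Fin q → ℝ) x))

lemma mv_eq_toEuclideanLin (M : Matrix (Fin p) (Fin q) ℝ) (x : EuclideanSpace ℝ (Fin q)) :
    mv M x = Matrix.toEuclideanLin M x := rfl

lemma norm_mv_le (M : Matrix (Fin p) (Fin q) ℝ) (x : EuclideanSpace ℝ (Fin q)) :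
    ‖mv M x‖ ≤ ‖M‖ * ‖x‖ := by
  rw [mv_eq_toEuclideanLin, Matrix.l2_opNorm_def]
  exact ((Matrix.toEuclideanLin.trans LinearMap.toContinuousLinearMap) M).le_opNorm x

lemma opNorm_le_bound (M : Matrix (Fin p) (Fin q) ℝ) {c : ℝ} (hc : 0 ≤ c)
    (h : ∀ x : EuclideanSpace ℝ (Fin q), ‖mv M x‖ ≤ c * ‖x‖) : ‖M‖ ≤ c := by
  rw [Matrix.l2_opNorm_def]
  exact ContinuousLinearMap.opNorm_le_bound _ hc h

lemma mv_mul (M : Matrix (Fin p) (Fin q) ℝ) (N : Matrix (Fin q) (Fin r) ℝ)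
    (x : EuclideanSpace ℝ (Fin r)) : mv (M * N) x = mv M (mv N x) := by
  simp [mv, Matrix.mulVec_mulVec]

lemma mv_one (x : EuclideanSpace ℝ (Fin p)) : mv 1 x = x := by simp [mv]

lemma mv_add (M N : Matrix (Fin p) (Fin q) ℝ) (x : EuclideanSpace ℝ (Fin q)) :
    mv (M + N) x = mv M x + mv N x := by
  simp [mv, Matrix.add_mulVec]

lemma mv_sub (M N : Matrix (Fin p) (Fin q) ℝ) (x : EuclideanSpace ℝ (Fin q)) :
    mv (M - N) x = mv M x - mv N x := by
  simp [mv, Matrix.sub_mulVec]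

lemma mv_smul (c : ℝ) (M : Matrix (Fin p) (Fin q) ℝ) (x : EuclideanSpace ℝ (Fin q)) :
    mv M (c • x) = c • mv M x := by
  simp [mv, Matrix.mulVec_smul]

lemma inner_mv (M : Matrix (Fin p) (Fin q) ℝ) (x : EuclideanSpace ℝ (Fin q))
    (y : EuclideanSpace ℝ (Fin p)) : inner ℝ (mv M x) y = (inner ℝ x (mv Mᵀ y) : ℝ) := by
  simp only [mv, PiLp.inner_apply, RCLike.inner_apply, starRingEnd_apply, star_trivial]
  show y ⬝ᵥ (M *ᵥ x) = (Mᵀ *ᵥ y) ⬝ᵥ x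
  rw [dotProduct_mulVec, mulVec_transpose]

lemma norm_sq_eq (x : EuclideanSpace ℝ (Fin p)) : ‖x‖ ^ 2 = inner ℝ x x := by
  rw [real_inner_self_eq_norm_sq]

-- new material

lemma inner_eq_sum (x y : EuclideanSpace ℝ (Fin p)) :
    (inner ℝ x y : ℝ) = ∑ i, x i * y i := by
  simp [PiLp.inner_apply, mul_comm]

lemma norm_transpose (M : Matrix (Fin p) (Fin q) ℝ) : ‖Mᵀ‖ = ‖M‖ := by
  have : Mᵀ = Mᴴ := by
    ext i j; simp [Matrix.conjTranspose_apply]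
  rw [this, Matrix.l2_opNorm_conjTranspose]

lemma norm_mv_eq_of_iso {B : Matrix (Fin p) (Fin q) ℝ} (hB : Bᵀ * B = 1)
    (x : EuclideanSpace ℝ (Fin q)) : ‖mv B x‖ = ‖x‖ := by
  have h1 : ‖mv B x‖ ^ 2 = ‖x‖ ^ 2 := by
    rw [norm_sq_eq, norm_sq_eq, inner_mv, ← mv_mul, hB, mv_one]
  nlinarith [norm_nonneg (mv B x), norm_nonneg x, h1]

lemma norm_mul_left_iso {B : Matrix (Fin p) (Fin q) ℝ} (hB : Bᵀ * B = 1)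
    (M : Matrix (Fin q) (Fin r) ℝ) : ‖B * M‖ = ‖M‖ := by
  apply le_antisymm
  · apply opNorm_le_bound _ (norm_nonneg M)
    intro x
    rw [mv_mul, norm_mv_eq_of_iso hB]
    exact norm_mv_le M x
  · apply opNorm_le_bound _ (norm_nonneg _)
    intro x
    rw [← norm_mv_eq_of_iso hB (mv M x), ← mv_mul]
    exact norm_mv_le _ x

lemma norm_mul_right_iso {B : Matrix (Fin p) (Fin q) ℝ} (hB : Bᵀ * B = 1)
    (M : Matrix (Fin p) (Fin r) ℝ) : ‖Bᵀ * M‖ ≤ ‖M‖ := by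
  apply opNorm_le_bound _ (norm_nonneg M)
  intro x
  rw [mv_mul]
  calc ‖mv Bᵀ (mv M x)‖ ≤ ‖Bᵀ‖ * ‖mv M x‖ := norm_mv_le _ _
  _ ≤ 1 * (‖M‖ * ‖x‖) := by
      apply mul_le_mul _ (norm_mv_le _ _) (norm_nonneg _) zero_le_one
      rw [norm_transpose]
      apply opNorm_le_bound _ zero_le_one
      intro y; rw [norm_mv_eq_of_iso hB, one_mul]
  _ = ‖M‖ * ‖x‖ := one_mul _

/-- ‖M * Bᵀ‖ = ‖M‖ when B has orthonormal columns -/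
lemma norm_mul_conj_iso {B : Matrix (Fin p) (Fin q) ℝ} (hB : Bᵀ * B = 1)
    (M : Matrix (Fin r) (Fin q) ℝ) : ‖M * Bᵀ‖ = ‖M‖ := by
  rw [← norm_transpose (M * Bᵀ), Matrix.transpose_mul, Matrix.transpose_transpose,
    norm_mul_left_iso hB, norm_transpose]

lemma norm_B_le_one {B : Matrix (Fin p) (Fin q) ℝ} (hB : Bᵀ * B = 1) : ‖B‖ ≤ 1 := by
  apply opNorm_le_bound _ zero_le_one
  intro x; rw [norm_mv_eq_of_iso hB, one_mul]

lemma inner_mv_diagonal (f : Fin p → ℝ) (x : EuclideanSpace ℝ (Fin p)) :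
    (inner ℝ x (mv (Matrix.diagonal f) x) : ℝ) = ∑ i, f i * x i ^ 2 := by
  rw [inner_eq_sum]
  congr 1; ext i
  show x i * (Matrix.diagonal f *ᵥ x) i = _
  rw [Matrix.mulVec_diagonal]
  ring

lemma inner_mv_diagonal_le {f : Fin p → ℝ} {s : ℝ} (hf : ∀ i, f i ≤ s)
    (x : EuclideanSpace ℝ (Fin p)) :
    (inner ℝ x (mv (Matrix.diagonal f) x) : ℝ) ≤ s * ‖x‖ ^ 2 := by
  rw [inner_mv_diagonal, norm_sq_eq, inner_eq_sum, Finset.mul_sum]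
  apply Finset.sum_le_sum
  intro i _
  have : x i * x i = x i ^ 2 := by ring
  rw [this]
  exact mul_le_mul_of_nonneg_right (hf i) (sq_nonneg _)

lemma inner_mv_diagonal_ge {f : Fin p → ℝ} {s : ℝ} (hf : ∀ i, s ≤ f i)
    (x : EuclideanSpace ℝ (Fin p)) :
    s * ‖x‖ ^ 2 ≤ (inner ℝ x (mv (Matrix.diagonal f) x) : ℝ) := by
  rw [inner_mv_diagonal, norm_sq_eq, inner_eq_sum, Finset.mul_sum]
  apply Finset.sum_le_sum
  intro i _
  have : x i * x i = x i ^ 2 := by ring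
  rw [this]
  exact mul_le_mul_of_nonneg_right (hf i) (sq_nonneg _)


lemma euclid_norm_le_of_coord {u w : EuclideanSpace ℝ (Fin p)} {c : ℝ} (hc : 0 ≤ c)
    (h : ∀ i, |u i| ≤ c * |w i|) : ‖u‖ ≤ c * ‖w‖ := by
  have hu : ‖u‖ ^ 2 = ∑ i, u i ^ 2 := by
    rw [norm_sq_eq, inner_eq_sum]; congr 1; ext i; ring
  have hw : ‖w‖ ^ 2 = ∑ i, w i ^ 2 := by
    rw [norm_sq_eq, inner_eq_sum]; congr 1; ext i; ring
  have hsum : ∑ i, u i ^ 2 ≤ c ^ 2 * ∑ i, w i ^ 2 := by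
    rw [Finset.mul_sum]
    apply Finset.sum_le_sum
    intro i _
    have := h i
    nlinarith [abs_nonneg (u i), abs_nonneg (w i), sq_abs (u i), sq_abs (w i)]
  nlinarith [norm_nonneg u, norm_nonneg w, mul_nonneg hc (norm_nonneg w)]

/-- top eigenpair of a symmetric matrix -/
lemma exists_top_eigen {q : ℕ} (hq : 0 < q) (S : Matrix (Fin q) (Fin q) ℝ) (hS : Sᵀ = S) :
    ∃ (μ : ℝ) (v : EuclideanSpace ℝ (Fin q)), ‖v‖ = 1 ∧ mv S v = μ • v ∧ |μ| = ‖S‖ := by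
  have hHerm : S.IsHermitian := by
    rw [Matrix.IsHermitian]
    ext i j
    simpa [Matrix.conjTranspose_apply] using congrFun (congrFun hS i) j
  set b := hHerm.eigenvectorBasis with hb
  set eig := hHerm.eigenvalues with heig
  have heigen : ∀ j, mv S (b j) = eig j • b j := by
    intro j
    ext i
    exact congrFun (hHerm.mulVec_eigenvectorBasis j) i
  have hunit : ∀ j, ‖b j‖ = 1 := fun j => b.orthonormal.1 j
  -- pick maximizer of |eig|
  obtain ⟨j₀, -, hj₀⟩ := Finset.exists_max_image (Finset.univ : Finset (Fin q))
    (fun j => |eig j|) ⟨⟨0, hq⟩, Finset.mem_univ _⟩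
  refine ⟨eig j₀, b j₀, hunit j₀, heigen j₀, le_antisymm ?_ ?_⟩
  · -- |eig j₀| ≤ ‖S‖
    have h1 : ‖mv S (b j₀)‖ ≤ ‖S‖ * ‖b j₀‖ := norm_mv_le _ _
    rw [heigen j₀, norm_smul, hunit j₀, mul_one, mul_one] at h1
    simpa using h1
  · -- ‖S‖ ≤ |eig j₀|
    apply opNorm_le_bound _ (abs_nonneg _)
    intro x
    have hsymm : ∀ y : EuclideanSpace ℝ (Fin q), ∀ i,
        b.repr (mv S y) i = eig i * b.repr y i := by
      intro y i
      rw [OrthonormalBasis.repr_apply_apply, OrthonormalBasis.repr_apply_apply]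
      have h1 : (inner ℝ (b i) (mv S y) : ℝ) = inner ℝ (mv S (b i)) y := by
        rw [inner_mv, hS]
      rw [h1, heigen i, inner_smul_left]
      simp
    rw [← b.repr.norm_map (mv S x), ← b.repr.norm_map x]
    apply euclid_norm_le_of_coord (abs_nonneg _)
    intro i
    rw [hsymm x i, abs_mul]
    exact mul_le_mul_of_nonneg_right (hj₀ i (Finset.mem_univ i)) (abs_nonneg _)

/-- Sylvester-type separation bound: if `M = X * D − E * X` with diagonal `D ≥ s+γ`,
diagonal `E ≤ s`, then `γ * ‖X‖ ≤ ‖M‖`. -/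
lemma sylvester_bound {p q : ℕ} (hq : 0 < q) (X M : Matrix (Fin p) (Fin q) ℝ)
    (d : Fin q → ℝ) (e : Fin p → ℝ) (s γ : ℝ) (hγ : 0 ≤ γ)
    (hd : ∀ j, s + γ ≤ d j) (he : ∀ i, e i ≤ s)
    (hM : M = X * Matrix.diagonal d - Matrix.diagonal e * X) :
    γ * ‖X‖ ≤ ‖M‖ := by
  rcases eq_or_lt_of_le (norm_nonneg X) with h0 | hX0
  · rw [← h0, mul_zero]; exact norm_nonneg M
  have hTT : (Xᵀ * X)ᵀ = Xᵀ * X := by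
    rw [Matrix.transpose_mul, Matrix.transpose_transpose]
  obtain ⟨μ, v, hv, hμv, hμ⟩ := exists_top_eigen hq (Xᵀ * X) hTT
  have hvv : (inner ℝ v v : ℝ) = 1 := by
    rw [← norm_sq_eq, hv]; norm_num
  have hμval : (inner ℝ v (mv (Xᵀ * X) v) : ℝ) = μ := by
    rw [hμv, real_inner_smul_right, hvv, mul_one]
  have hμpos : (inner ℝ v (mv (Xᵀ * X) v) : ℝ) = ‖mv X v‖ ^ 2 := by
    rw [mv_mul, norm_sq_eq]
    exact (inner_mv X v (mv X v)).symm
  have hμnn : 0 ≤ μ := by rw [← hμval, hμpos]; positivity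
  have hnormsq : μ = ‖X‖ * ‖X‖ := by
    rw [← abs_of_nonneg hμnn, hμ]
    have : Xᵀ = Xᴴ := by ext i j; simp [Matrix.conjTranspose_apply]
    rw [this, Matrix.l2_opNorm_conjTranspose_mul_self]
  -- key computation
  have key : γ * μ ≤ (inner ℝ v (mv (Xᵀ * M) v) : ℝ) := by
    have hexp : Xᵀ * M = (Xᵀ * X) * Matrix.diagonal d - Xᵀ * Matrix.diagonal e * X := by
      rw [hM, Matrix.mul_sub, ← Matrix.mul_assoc, ← Matrix.mul_assoc]
    have t1 : (inner ℝ v (mv ((Xᵀ * X) * Matrix.diagonal d) v) : ℝ) =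
        μ * inner ℝ v (mv (Matrix.diagonal d) v) := by
      rw [mv_mul]
      have h2 : (inner ℝ v (mv (Xᵀ * X) (mv (Matrix.diagonal d) v)) : ℝ)
          = inner ℝ (mv (Xᵀ * X) v) (mv (Matrix.diagonal d) v) := by
        rw [real_inner_comm, inner_mv, hTT, real_inner_comm]
      rw [h2, hμv, real_inner_smul_left]
    have t2 : (inner ℝ v (mv (Xᵀ * Matrix.diagonal e * X) v) : ℝ) =
        inner ℝ (mv X v) (mv (Matrix.diagonal e) (mv X v)) := by
      rw [Matrix.mul_assoc, mv_mul, mv_mul]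
      exact (inner_mv X v _).symm
    rw [hexp, mv_sub, inner_sub_right, t1, t2]
    have b1 : s + γ ≤ (inner ℝ v (mv (Matrix.diagonal d) v) : ℝ) := by
      have := inner_mv_diagonal_ge hd v
      rwa [hv, one_pow, mul_one] at this
    have b2 : (inner ℝ (mv X v) (mv (Matrix.diagonal e) (mv X v)) : ℝ) ≤ s * μ := by
      have := inner_mv_diagonal_le he (mv X v)
      rwa [← hμpos, hμval] at this
    nlinarith [mul_le_mul_of_nonneg_left b1 hμnn]
  have bound : (inner ℝ v (mv (Xᵀ * M) v) : ℝ) ≤ ‖X‖ * ‖M‖ := by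
    calc (inner ℝ v (mv (Xᵀ * M) v) : ℝ) ≤ ‖v‖ * ‖mv (Xᵀ * M) v‖ := real_inner_le_norm _ _
    _ ≤ ‖v‖ * (‖Xᵀ * M‖ * ‖v‖) :=
        mul_le_mul_of_nonneg_left (norm_mv_le _ _) (norm_nonneg _)
    _ = ‖Xᵀ * M‖ := by rw [hv]; ring
    _ ≤ ‖Xᵀ‖ * ‖M‖ := Matrix.l2_opNorm_mul _ _
    _ = ‖X‖ * ‖M‖ := by rw [norm_transpose]
  nlinarith [key, bound, hnormsq]


set_option maxHeartbeats 1000000 in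
/-- difference of orthogonal projections bounded by max of the two cross terms -/
lemma proj_diff_norm_le {p : ℕ} (P Q : Matrix (Fin p) (Fin p) ℝ)
    (hP1 : P * P = P) (hP2 : Pᵀ = P) (hQ1 : Q * Q = Q) (hQ2 : Qᵀ = Q) :
    ‖P - Q‖ ≤ max ‖P * (1 - Q)‖ ‖(1 - P) * Q‖ := by
  set a := ‖P * (1 - Q)‖
  set b := ‖(1 - P) * Q‖
  have ha : 0 ≤ a := norm_nonneg _
  have hb : 0 ≤ b := norm_nonneg _
  apply opNorm_le_bound _ (le_max_of_le_left ha)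
  intro x
  have hsplit : P - Q = P * (1 - Q) - (1 - P) * Q := by noncomm_ring
  have hQidem : (1 - Q) * (1 - Q) = 1 - Q := by
    rw [Matrix.sub_mul, Matrix.mul_sub, Matrix.mul_sub, hQ1]; noncomm_ring
  set u := mv (P * (1 - Q)) x with hu
  set w := mv ((1 - P) * Q) x with hw
  have hmv : mv (P - Q) x = u - w := by rw [hsplit, mv_sub]
  -- orthogonality of u and w
  have hortho : (inner ℝ u w : ℝ) = 0 := by
    rw [hu, hw, mv_mul, mv_mul, inner_mv, ← mv_mul]
    have : Pᵀ * (1 - P) = 0 := by rw [hP2, Matrix.mul_sub, hP1]; noncomm_ring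
    rw [this]
    have : mv (0 : Matrix (Fin p) (Fin p) ℝ) (mv Q x) = 0 := by simp [mv]
    rw [this, inner_zero_right]
  -- orthogonality of Qx and (1-Q)x
  have hortho2 : (inner ℝ (mv Q x) (mv (1 - Q) x) : ℝ) = 0 := by
    rw [inner_mv, hQ2, ← mv_mul]
    have : Q * (1 - Q) = 0 := by rw [Matrix.mul_sub, hQ1]; noncomm_ring
    rw [this]
    have : mv (0 : Matrix (Fin p) (Fin p) ℝ) x = 0 := by simp [mv]
    rw [this, inner_zero_right]
  have hx : mv Q x + mv (1 - Q) x = x := by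
    rw [← mv_add]
    have : Q + (1 - Q) = (1 : Matrix (Fin p) (Fin p) ℝ) := by abel
    rw [this, mv_one]
  have hpyth1 : ‖u - w‖ ^ 2 = ‖u‖ ^ 2 + ‖w‖ ^ 2 := by
    rw [norm_sub_sq_real, hortho]; ring
  have hpyth2 : ‖mv Q x‖ ^ 2 + ‖mv (1 - Q) x‖ ^ 2 = ‖x‖ ^ 2 := by
    have := norm_add_sq_real (mv Q x) (mv (1 - Q) x)
    rw [hortho2, hx] at this
    linarith
  have hub : ‖u‖ ≤ a * ‖mv (1 - Q) x‖ := by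
    have : u = mv (P * (1 - Q)) (mv (1 - Q) x) := by
      rw [hu, ← mv_mul, Matrix.mul_assoc, hQidem]
    rw [this]
    exact norm_mv_le _ _
  have hwb : ‖w‖ ≤ b * ‖mv Q x‖ := by
    have : w = mv ((1 - P) * Q) (mv Q x) := by
      rw [hw, ← mv_mul, Matrix.mul_assoc, hQ1]
    rw [this]
    exact norm_mv_le _ _
  set c := max a b
  have hac : a ≤ c := le_max_left _ _
  have hbc : b ≤ c := le_max_right _ _
  have hc : 0 ≤ c := le_trans ha hac
  rw [hmv]
  have hu2 : ‖u‖ ≤ c * ‖mv (1 - Q) x‖ :=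
    le_trans hub (mul_le_mul_of_nonneg_right hac (norm_nonneg _))
  have hw2 : ‖w‖ ≤ c * ‖mv Q x‖ :=
    le_trans hwb (mul_le_mul_of_nonneg_right hbc (norm_nonneg _))
  have hsq : ‖u - w‖ ^ 2 ≤ (c * ‖x‖) ^ 2 := by
    rw [hpyth1]
    have h1 : ‖u‖ ^ 2 ≤ c ^ 2 * ‖mv (1 - Q) x‖ ^ 2 := by
      nlinarith [norm_nonneg u, mul_nonneg hc (norm_nonneg (mv (1 - Q) x))]
    have h2 : ‖w‖ ^ 2 ≤ c ^ 2 * ‖mv Q x‖ ^ 2 := by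
      nlinarith [norm_nonneg w, mul_nonneg hc (norm_nonneg (mv Q x))]
    nlinarith [hpyth2]
  nlinarith [norm_nonneg (u - w), mul_nonneg hc (norm_nonneg x)]

/-- restriction of coordinates after applying `Wᵀ` -/
noncomputable def coordMap {m : ℕ} (W : Matrix (Fin m) (Fin m) ℝ) (s : Set (Fin m)) :
    EuclideanSpace ℝ (Fin m) →ₗ[ℝ] (s → ℝ) :=
  (LinearMap.funLeft ℝ ℝ (fun j : s => (j : Fin m))).comp
    ((WithLp.linearEquiv 2 ℝ (Fin m → ℝ)).toLinearMap.comp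
      (Matrix.toEuclideanLin Wᵀ))

lemma coordMap_apply {m : ℕ} (W : Matrix (Fin m) (Fin m) ℝ) (s : Set (Fin m))
    (x : EuclideanSpace ℝ (Fin m)) (j : s) : coordMap W s x j = mv Wᵀ x (j : Fin m) := rfl

lemma finrank_ker_coordMap {m : ℕ} (W : Matrix (Fin m) (Fin m) ℝ) (s : Set (Fin m))
    [Fintype s] :
    m - Fintype.card s ≤ Module.finrank ℝ (LinearMap.ker (coordMap W s)) := by
  have h := LinearMap.finrank_range_add_finrank_ker (coordMap W s)
  have h2 : Module.finrank ℝ (LinearMap.range (coordMap W s)) ≤ Fintype.card s := by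
    calc Module.finrank ℝ (LinearMap.range (coordMap W s))
        ≤ Module.finrank ℝ (s → ℝ) := Submodule.finrank_le _
    _ = Fintype.card s := by simp [Module.finrank_pi]
  have h3 : Module.finrank ℝ (EuclideanSpace ℝ (Fin m)) = m := by
    simp [finrank_euclideanSpace]
  omega


lemma inner_x_mv (M : Matrix (Fin p) (Fin q) ℝ) (x : EuclideanSpace ℝ (Fin p))
    (y : EuclideanSpace ℝ (Fin q)) : (inner ℝ x (mv M y) : ℝ) = inner ℝ (mv Mᵀ x) y := by
  rw [real_inner_comm, inner_mv, real_inner_comm]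

/-- Weyl's inequality for ordered eigenvalues of symmetric matrices with explicit
eigendecompositions. -/
lemma weyl {m : ℕ} (C Chat W What : Matrix (Fin m) (Fin m) ℝ)
    (lam lamhat : Fin m → ℝ) (hlam : Antitone lam) (hlamhat : Antitone lamhat)
    (hW : Wᵀ * W = 1) (hWhat : Whatᵀ * What = 1)
    (hCdec : C = W * Matrix.diagonal lam * Wᵀ)
    (hChatdec : Chat = What * Matrix.diagonal lamhat * Whatᵀ)
    (k : Fin m) : lam k - ‖C - Chat‖ ≤ lamhat k := by
  have hWW : W * Wᵀ = 1 := mul_eq_one_comm.mp hW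
  have hWWhat : What * Whatᵀ = 1 := mul_eq_one_comm.mp hWhat
  set U := LinearMap.ker (coordMap W (Set.Ioi k))
  set V := LinearMap.ker (coordMap What (Set.Iio k))
  have hU : m - (m - 1 - (k : ℕ)) ≤ Module.finrank ℝ U := by
    have := finrank_ker_coordMap W (Set.Ioi k)
    rwa [Fintype.card_Ioi, Fin.card_Ioi] at this
  have hV : m - (k : ℕ) ≤ Module.finrank ℝ V := by
    have := finrank_ker_coordMap What (Set.Iio k)
    rwa [Fintype.card_Iio, Fin.card_Iio] at this
  -- the intersection is nontrivial
  have hinf : U ⊓ V ≠ ⊥ := by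
    intro hbot
    have hsum := Submodule.finrank_sup_add_finrank_inf_eq U V
    have hle : Module.finrank ℝ ↥(U ⊔ V) ≤ m := by
      calc Module.finrank ℝ ↥(U ⊔ V) ≤ Module.finrank ℝ (EuclideanSpace ℝ (Fin m)) :=
        Submodule.finrank_le _
      _ = m := by simp [finrank_euclideanSpace]
    rw [hbot, finrank_bot] at hsum
    have hk := k.isLt
    omega
  obtain ⟨x, hxUV, hx0⟩ := Submodule.exists_mem_ne_zero_of_ne_bot hinf
  have hxU : x ∈ U := hxUV.1
  have hxV : x ∈ V := hxUV.2
  set c := mv Wᵀ x with hc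
  set ch := mv Whatᵀ x with hch
  have hcz : ∀ i : Fin m, k < i → c i = 0 := by
    intro i hi
    have := LinearMap.mem_ker.mp hxU
    exact congrFun this ⟨i, hi⟩
  have hchz : ∀ i : Fin m, i < k → ch i = 0 := by
    intro i hi
    have := LinearMap.mem_ker.mp hxV
    exact congrFun this ⟨i, hi⟩
  -- norms
  have hnormc : (inner ℝ c c : ℝ) = ‖x‖ ^ 2 := by
    rw [hc, inner_mv, ← mv_mul, Matrix.transpose_transpose, hWW, mv_one, ← norm_sq_eq]
  have hnormch : (inner ℝ ch ch : ℝ) = ‖x‖ ^ 2 := by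
    rw [hch, inner_mv, ← mv_mul, Matrix.transpose_transpose, hWWhat, mv_one, ← norm_sq_eq]
  -- quadratic forms
  have hqC : (inner ℝ x (mv C x) : ℝ) = ∑ i, lam i * c i ^ 2 := by
    rw [hCdec, mv_mul, mv_mul, inner_x_mv, ← hc, inner_mv_diagonal]
  have hqChat : (inner ℝ x (mv Chat x) : ℝ) = ∑ i, lamhat i * ch i ^ 2 := by
    rw [hChatdec, mv_mul, mv_mul, inner_x_mv, ← hch, inner_mv_diagonal]
  -- lower bound for C form
  have hcsum : ∑ i, (c i) * (c i) = ‖x‖ ^ 2 := by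
    rw [← hnormc, inner_eq_sum]
  have hchsum : ∑ i, (ch i) * (ch i) = ‖x‖ ^ 2 := by
    rw [← hnormch, inner_eq_sum]
  have hlowC : lam k * ‖x‖ ^ 2 ≤ (inner ℝ x (mv C x) : ℝ) := by
    rw [hqC, ← hcsum, Finset.mul_sum]
    apply Finset.sum_le_sum
    intro i _
    rcases le_or_gt i k with hik | hik
    · have h1 : lam k ≤ lam i := hlam hik
      nlinarith [sq_nonneg (c i), sq_abs (c i)]
    · rw [hcz i hik]
      simp
  have hupChat : (inner ℝ x (mv Chat x) : ℝ) ≤ lamhat k * ‖x‖ ^ 2 := by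
    rw [hqChat, ← hchsum, Finset.mul_sum]
    apply Finset.sum_le_sum
    intro i _
    rcases lt_or_ge i k with hik | hik
    · rw [hchz i hik]
      simp
    · have h1 : lamhat i ≤ lamhat k := hlamhat hik
      nlinarith [sq_nonneg (ch i)]
  -- perturbation bound
  have hpert : (inner ℝ x (mv (C - Chat) x) : ℝ) ≤ ‖C - Chat‖ * ‖x‖ ^ 2 := by
    calc (inner ℝ x (mv (C - Chat) x) : ℝ) ≤ ‖x‖ * ‖mv (C - Chat) x‖ := real_inner_le_norm _ _
    _ ≤ ‖x‖ * (‖C - Chat‖ * ‖x‖) :=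
        mul_le_mul_of_nonneg_left (norm_mv_le _ _) (norm_nonneg _)
    _ = ‖C - Chat‖ * ‖x‖ ^ 2 := by ring
  have hsplit : (inner ℝ x (mv C x) : ℝ) = inner ℝ x (mv Chat x) + inner ℝ x (mv (C - Chat) x) := by
    rw [mv_sub, inner_sub_right]
    ring
  have hxpos : 0 < ‖x‖ ^ 2 := by
    have : 0 < ‖x‖ := norm_pos_iff.mpr hx0
    positivity
  have := hlowC
  rw [hsplit] at this
  nlinarith [this, hupChat, hpert]


/-- selected columns of an orthogonal matrix are orthonormal -/
lemma sel_orth {m k : ℕ} (W : Matrix (Fin m) (Fin m) ℝ) (hW : Wᵀ * W = 1)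
    (f : Fin k → Fin m) (hf : Function.Injective f)
    (S : Matrix (Fin m) (Fin k) ℝ) (hS : S = fun i j => W i (f j)) : Sᵀ * S = 1 := by
  ext j l
  have h := congrFun (congrFun hW (f j)) (f l)
  simp only [Matrix.mul_apply, Matrix.transpose_apply, Matrix.one_apply] at h ⊢
  rw [hS]
  simp only
  rw [h]
  by_cases hjl : j = l
  · simp [hjl]
  · have : f j ≠ f l := fun hc => hjl (hf hc)
    simp [hjl, this]

/-- the "selection" matrix -/
def selJ {m k : ℕ} (f : Fin k → Fin m) : Matrix (Fin m) (Fin k) ℝ :=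
  fun i j => if i = f j then 1 else 0

lemma WtS_eq_selJ {m k : ℕ} (W : Matrix (Fin m) (Fin m) ℝ) (hW : Wᵀ * W = 1)
    (f : Fin k → Fin m) (S : Matrix (Fin m) (Fin k) ℝ) (hS : S = fun i j => W i (f j)) :
    Wᵀ * S = selJ f := by
  ext a j
  have h := congrFun (congrFun hW a) (f j)
  simp only [Matrix.mul_apply, Matrix.transpose_apply, Matrix.one_apply] at h ⊢
  rw [hS]
  simp only
  rw [h, selJ]

lemma selJ_diag {m k : ℕ} (f : Fin k → Fin m) (lam : Fin m → ℝ) :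
    Matrix.diagonal lam * selJ f = selJ f * Matrix.diagonal (fun j => lam (f j)) := by
  ext a j
  rw [Matrix.diagonal_mul, Matrix.mul_diagonal]
  by_cases h : a = f j
  · simp [selJ, h]
  · simp [selJ, h]

lemma W_selJ {m k : ℕ} (W : Matrix (Fin m) (Fin m) ℝ) (f : Fin k → Fin m)
    (S : Matrix (Fin m) (Fin k) ℝ) (hS : S = fun i j => W i (f j)) : W * selJ f = S := by
  ext i j
  simp only [Matrix.mul_apply, selJ, hS]
  rw [Finset.sum_eq_single (f j)] <;> simp +contextual

/-- eigen-relation for selected columns -/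
lemma sel_eigen {m k : ℕ} (W : Matrix (Fin m) (Fin m) ℝ) (hW : Wᵀ * W = 1)
    (lam : Fin m → ℝ) (f : Fin k → Fin m)
    (S : Matrix (Fin m) (Fin k) ℝ) (hS : S = fun i j => W i (f j)) :
    (W * Matrix.diagonal lam * Wᵀ) * S = S * Matrix.diagonal (fun j => lam (f j)) := by
  calc (W * Matrix.diagonal lam * Wᵀ) * S = W * (Matrix.diagonal lam * (Wᵀ * S)) := by
        rw [Matrix.mul_assoc, Matrix.mul_assoc]
  _ = W * (Matrix.diagonal lam * selJ f) := by rw [WtS_eq_selJ W hW f S hS]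
  _ = W * (selJ f * Matrix.diagonal (fun j => lam (f j))) := by rw [selJ_diag]
  _ = (W * selJ f) * Matrix.diagonal (fun j => lam (f j)) := by rw [Matrix.mul_assoc]
  _ = S * Matrix.diagonal (fun j => lam (f j)) := by rw [W_selJ W f S hS]

/-- completeness: the two blocks of columns give a resolution of identity -/
lemma split_complete {m n : ℕ} (hnm : n < m) (W : Matrix (Fin m) (Fin m) ℝ)
    (hWW : W * Wᵀ = 1)
    (A : Matrix (Fin m) (Fin n) ℝ) (B : Matrix (Fin m) (Fin (m - n)) ℝ)
    (hA : A = fun i j => W i (Fin.castLE hnm.le j))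
    (hB : B = fun i j => W i (Fin.cast (Nat.add_sub_cancel' hnm.le) (Fin.natAdd n j))) :
    A * Aᵀ + B * Bᵀ = 1 := by
  have hmn : n + (m - n) = m := Nat.add_sub_cancel' hnm.le
  ext i i'
  have h := congrFun (congrFun hWW i) i'
  simp only [Matrix.mul_apply, Matrix.transpose_apply, Matrix.add_apply] at h ⊢
  rw [hA, hB]
  simp only
  rw [← h]
  have := Fintype.sum_equiv ((finSumFinEquiv (m := n) (n := m - n)).trans (finCongr hmn))
    (fun s => W i (((finSumFinEquiv.trans (finCongr hmn)) s)) *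
      W i' (((finSumFinEquiv.trans (finCongr hmn)) s)))
    (fun k => W i k * W i' k) (fun s => rfl)
  rw [← this, Fintype.sum_sum_type]
  have he1 : ∀ j : Fin n, ((finSumFinEquiv.trans (finCongr hmn)) (Sum.inl j)) =
      Fin.castLE hnm.le j := fun j => Fin.ext (by simp)
  have he2 : ∀ j : Fin (m - n), ((finSumFinEquiv.trans (finCongr hmn)) (Sum.inr j)) =
      Fin.cast (Nat.add_sub_cancel' hnm.le) (Fin.natAdd n j) := fun j => Fin.ext (by simp)
  simp only [he1, he2]

end EPB


set_option maxHeartbeats 1600000 in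
/-- Eigenspace perturbation bound (Golub & Van Loan, Corollary 8.1.11). If `C`,
`Ĉ` are symmetric with orthogonal eigendecompositions `C = W diag(λ) Wᵀ`, `Ĉ = Ŵ diag(λ̂) Ŵᵀ`
with eigenvalues in decreasing order, `A`, `Â` are the first `n` columns of `W`, `Ŵ`, `B` the
last `m − n` columns of `W`, the spectral gap `δ = λ_n − λ_{n+1} > 0`, and `‖C − Ĉ‖₂ ≤ δ/5`,
then `‖AAᵀ − ÂÂᵀ‖₂ ≤ (4/δ) ‖Bᵀ (C − Ĉ) A‖₂`. -/
theorem eigenspace_perturbation_bound (m n : ℕ) (hn : 0 < n) (hnm : n < m)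
    (C Chat W What : Matrix (Fin m) (Fin m) ℝ)
    (lam lamhat : Fin m → ℝ) (hlam : Antitone lam) (hlamhat : Antitone lamhat)
    (hW : Wᵀ * W = 1) (hWhat : Whatᵀ * What = 1)
    (hCdec : C = W * Matrix.diagonal lam * Wᵀ)
    (hChatdec : Chat = What * Matrix.diagonal lamhat * Whatᵀ)
    (A Ahat : Matrix (Fin m) (Fin n) ℝ) (B : Matrix (Fin m) (Fin (m - n)) ℝ)
    (hA : A = fun i j => W i (Fin.castLE hnm.le j))
    (hAhat : Ahat = fun i j => What i (Fin.castLE hnm.le j))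
    (hB : B = fun i j => W i (Fin.cast (Nat.add_sub_cancel' hnm.le) (Fin.natAdd n j)))
    (δ : ℝ) (hδdef : δ = lam ⟨n - 1, by omega⟩ - lam ⟨n, hnm⟩) (hδ : 0 < δ)
    (hpert : ‖C - Chat‖ ≤ δ / 5) :
    ‖A * Aᵀ - Ahat * Ahatᵀ‖ ≤ (4 / δ) * ‖Bᵀ * (C - Chat) * A‖ := by
  classical
  have hmn : n + (m - n) = m := Nat.add_sub_cancel' hnm.le
  set e1 : Fin n → Fin m := Fin.castLE hnm.le with he1def
  set e2 : Fin (m - n) → Fin m :=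
    fun j => Fin.cast (Nat.add_sub_cancel' hnm.le) (Fin.natAdd n j) with he2def
  have he1inj : Function.Injective e1 := Fin.castLE_injective _
  have he2inj : Function.Injective e2 := by
    intro a b h
    have := congrArg Fin.val h
    simp only [he2def, Fin.coe_cast, Fin.coe_natAdd] at this
    exact Fin.ext (by omega)
  set Bhat : Matrix (Fin m) (Fin (m - n)) ℝ := fun i j => What i (e2 j) with hBhatdef
  have hWW : W * Wᵀ = 1 := mul_eq_one_comm.mp hW
  have hWWhat : What * Whatᵀ = 1 := mul_eq_one_comm.mp hWhat
  -- orthonormality of the blocks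
  have hAo : Aᵀ * A = 1 := EPB.sel_orth W hW e1 he1inj A hA
  have hAhato : Ahatᵀ * Ahat = 1 := EPB.sel_orth What hWhat e1 he1inj Ahat hAhat
  have hBo : Bᵀ * B = 1 := EPB.sel_orth W hW e2 he2inj B hB
  have hBhato : Bhatᵀ * Bhat = 1 := EPB.sel_orth What hWhat e2 he2inj Bhat hBhatdef
  -- completeness
  have hcompW : A * Aᵀ + B * Bᵀ = 1 := EPB.split_complete hnm W hWW A B hA hB
  have hcompWhat : Ahat * Ahatᵀ + Bhat * Bhatᵀ = 1 :=
    EPB.split_complete hnm What hWWhat Ahat Bhat hAhat hBhatdef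
  have hP1 : B * Bᵀ = 1 - A * Aᵀ := by linear_combination (norm := noncomm_ring) hcompW
  have hQ1 : Bhat * Bhatᵀ = 1 - Ahat * Ahatᵀ := by
    linear_combination (norm := noncomm_ring) hcompWhat
  -- eigen-relations
  have hCA : C * A = A * Matrix.diagonal (fun j => lam (e1 j)) := by
    rw [hCdec]; exact EPB.sel_eigen W hW lam e1 A hA
  have hCB : C * B = B * Matrix.diagonal (fun j => lam (e2 j)) := by
    rw [hCdec]; exact EPB.sel_eigen W hW lam e2 B hB
  have hChatAhat : Chat * Ahat = Ahat * Matrix.diagonal (fun j => lamhat (e1 j)) := by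
    rw [hChatdec]; exact EPB.sel_eigen What hWhat lamhat e1 Ahat hAhat
  have hChatBhat : Chat * Bhat = Bhat * Matrix.diagonal (fun j => lamhat (e2 j)) := by
    rw [hChatdec]; exact EPB.sel_eigen What hWhat lamhat e2 Bhat hBhatdef
  have hCsymm : Cᵀ = C := by
    rw [hCdec]
    simp [Matrix.transpose_mul, Matrix.diagonal_transpose, Matrix.mul_assoc]
  have hChatsymm : Chatᵀ = Chat := by
    rw [hChatdec]
    simp [Matrix.transpose_mul, Matrix.diagonal_transpose, Matrix.mul_assoc]
  have hBtC : Bᵀ * C = Matrix.diagonal (fun j => lam (e2 j)) * Bᵀ := by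
    have h := congrArg Matrix.transpose hCB
    rw [Matrix.transpose_mul, Matrix.transpose_mul, hCsymm, Matrix.diagonal_transpose] at h
    exact h
  have hBhatTChat : Bhatᵀ * Chat = Matrix.diagonal (fun j => lamhat (e2 j)) * Bhatᵀ := by
    have h := congrArg Matrix.transpose hChatBhat
    rw [Matrix.transpose_mul, Matrix.transpose_mul, hChatsymm, Matrix.diagonal_transpose] at h
    exact h
  -- indices
  set k1 : Fin m := ⟨n - 1, by omega⟩ with hk1
  set kn : Fin m := ⟨n, hnm⟩ with hkn
  have hδ' : δ = lam k1 - lam kn := hδdef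
  -- Weyl inequalities
  have weyl1 : lam k1 - ‖C - Chat‖ ≤ lamhat k1 :=
    EPB.weyl C Chat W What lam lamhat hlam hlamhat hW hWhat hCdec hChatdec k1
  have weyl2 : lamhat kn - ‖Chat - C‖ ≤ lam kn :=
    EPB.weyl Chat C What W lamhat lam hlamhat hlam hWhat hW hChatdec hCdec kn
  have hrev : ‖Chat - C‖ = ‖C - Chat‖ := norm_sub_rev _ _
  rw [hrev] at weyl2
  -- the two Sylvester systems
  set X₁ : Matrix (Fin (m - n)) (Fin n) ℝ := Bᵀ * Ahat with hX₁
  set X₂ : Matrix (Fin (m - n)) (Fin n) ℝ := Bhatᵀ * A with hX₂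
  have he1le : ∀ j : Fin n, e1 j ≤ k1 := by
    intro j
    have := j.isLt
    simp only [he1def, Fin.le_def, Fin.coe_castLE, hk1]
    omega
  have he2ge : ∀ i : Fin (m - n), kn ≤ e2 i := by
    intro i
    simp only [he2def, Fin.le_def, Fin.coe_cast, Fin.coe_natAdd, hkn]
    omega
  have hd1 : ∀ j : Fin n, lam kn + 4 * δ / 5 ≤ lamhat (e1 j) := by
    intro j
    have h1 : lamhat k1 ≤ lamhat (e1 j) := hlamhat (he1le j)
    have h2 : lam k1 - ‖C - Chat‖ ≤ lamhat k1 := weyl1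
    linarith [hpert]
  have he1b : ∀ i : Fin (m - n), lam (e2 i) ≤ lam kn := fun i => hlam (he2ge i)
  have hM1eq : Bᵀ * (Chat - C) * Ahat =
      X₁ * Matrix.diagonal (fun j => lamhat (e1 j)) -
        Matrix.diagonal (fun i => lam (e2 i)) * X₁ := by
    have t1 : X₁ * Matrix.diagonal (fun j => lamhat (e1 j)) = Bᵀ * (Chat * Ahat) := by
      rw [hChatAhat, hX₁, Matrix.mul_assoc]
    have t2 : Matrix.diagonal (fun i => lam (e2 i)) * X₁ = Bᵀ * (C * Ahat) := by
      rw [hX₁, ← Matrix.mul_assoc, ← hBtC, Matrix.mul_assoc]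
    rw [t1, t2, Matrix.mul_sub, Matrix.sub_mul, Matrix.mul_assoc, Matrix.mul_assoc]
  have hγnn : (0:ℝ) ≤ 4 * δ / 5 := by linarith
  have syl1 : 4 * δ / 5 * ‖X₁‖ ≤ ‖Bᵀ * (Chat - C) * Ahat‖ :=
    EPB.sylvester_bound hn X₁ (Bᵀ * (Chat - C) * Ahat) (fun j => lamhat (e1 j))
      (fun i => lam (e2 i)) (lam kn) (4 * δ / 5) hγnn hd1 he1b hM1eq
  have hd2 : ∀ j : Fin n, (lam kn + δ / 5) + 4 * δ / 5 ≤ lam (e1 j) := by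
    intro j
    have h1 : lam k1 ≤ lam (e1 j) := hlam (he1le j)
    linarith
  have he2b : ∀ i : Fin (m - n), lamhat (e2 i) ≤ lam kn + δ / 5 := by
    intro i
    have h1 : lamhat (e2 i) ≤ lamhat kn := hlamhat (he2ge i)
    linarith [weyl2, hpert]
  have hM2eq : Bhatᵀ * (C - Chat) * A =
      X₂ * Matrix.diagonal (fun j => lam (e1 j)) -
        Matrix.diagonal (fun i => lamhat (e2 i)) * X₂ := by
    have t1 : X₂ * Matrix.diagonal (fun j => lam (e1 j)) = Bhatᵀ * (C * A) := by
      rw [hCA, hX₂, Matrix.mul_assoc]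
    have t2 : Matrix.diagonal (fun i => lamhat (e2 i)) * X₂ = Bhatᵀ * (Chat * A) := by
      rw [hX₂, ← Matrix.mul_assoc, ← hBhatTChat, Matrix.mul_assoc]
    rw [t1, t2, Matrix.mul_sub, Matrix.sub_mul, Matrix.mul_assoc, Matrix.mul_assoc]
  have syl2 : 4 * δ / 5 * ‖X₂‖ ≤ ‖Bhatᵀ * (C - Chat) * A‖ :=
    EPB.sylvester_bound hn X₂ (Bhatᵀ * (C - Chat) * A) (fun j => lam (e1 j))
      (fun i => lamhat (e2 i)) (lam kn + δ / 5) (4 * δ / 5) hγnn hd2 he2b hM2eq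
  -- abbreviations
  set r : ℝ := ‖Bᵀ * (C - Chat) * A‖ with hr
  set dd : ℝ := ‖A * Aᵀ - Ahat * Ahatᵀ‖ with hdd
  have hr0 : 0 ≤ r := norm_nonneg _
  have hd0 : 0 ≤ dd := norm_nonneg _
  have hQP : ‖Ahat * Ahatᵀ - A * Aᵀ‖ = dd := norm_sub_rev _ _
  -- norm of X₁ system RHS vs r
  have hBnorm : ‖Bᵀ * ((C - Chat) * (Ahat * Ahatᵀ - A * Aᵀ))‖ ≤ δ / 5 * dd := by
    calc ‖Bᵀ * ((C - Chat) * (Ahat * Ahatᵀ - A * Aᵀ))‖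
        ≤ ‖(C - Chat) * (Ahat * Ahatᵀ - A * Aᵀ)‖ := EPB.norm_mul_right_iso hBo _
    _ ≤ ‖C - Chat‖ * ‖Ahat * Ahatᵀ - A * Aᵀ‖ := Matrix.l2_opNorm_mul _ _
    _ ≤ δ / 5 * dd := by
        rw [hQP]
        exact mul_le_mul_of_nonneg_right hpert hd0
  have n1 : ‖Bᵀ * (Chat - C) * Ahat‖ ≤ r + δ / 5 * dd := by
    have step1 : ‖Bᵀ * (Chat - C) * Ahat‖ = ‖Bᵀ * (C - Chat) * Ahat‖ := by
      have : Bᵀ * (Chat - C) * Ahat = -(Bᵀ * (C - Chat) * Ahat) := by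
        simp only [Matrix.mul_sub, Matrix.sub_mul, Matrix.mul_assoc]
        abel
      rw [this, norm_neg]
    have step2 : ‖Bᵀ * (C - Chat) * Ahat‖ = ‖Bᵀ * (C - Chat) * Ahat * Ahatᵀ‖ :=
      (EPB.norm_mul_conj_iso hAhato _).symm
    have step3 : Bᵀ * (C - Chat) * Ahat * Ahatᵀ =
        Bᵀ * (C - Chat) * A * Aᵀ + Bᵀ * ((C - Chat) * (Ahat * Ahatᵀ - A * Aᵀ)) := by
      simp only [Matrix.mul_sub, Matrix.sub_mul, Matrix.mul_assoc]
      abel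
    rw [step1, step2, step3]
    calc ‖Bᵀ * (C - Chat) * A * Aᵀ + Bᵀ * ((C - Chat) * (Ahat * Ahatᵀ - A * Aᵀ))‖
        ≤ ‖Bᵀ * (C - Chat) * A * Aᵀ‖ + ‖Bᵀ * ((C - Chat) * (Ahat * Ahatᵀ - A * Aᵀ))‖ :=
          norm_add_le _ _
    _ ≤ r + δ / 5 * dd := by
        have h4 : ‖Bᵀ * (C - Chat) * A * Aᵀ‖ = r := EPB.norm_mul_conj_iso hAo _
        linarith [hBnorm]
  -- norm of X₂ system RHS vs r
  have n2 : ‖Bhatᵀ * (C - Chat) * A‖ ≤ r + δ / 5 * dd := by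
    have step1 : ‖Bhatᵀ * (C - Chat) * A‖ = ‖Bhat * (Bhatᵀ * (C - Chat) * A)‖ :=
      (EPB.norm_mul_left_iso hBhato _).symm
    have step2 : Bhat * (Bhatᵀ * (C - Chat) * A) =
        B * (Bᵀ * (C - Chat) * A) + (A * Aᵀ - Ahat * Ahatᵀ) * ((C - Chat) * A) := by
      have l1 : Bhat * (Bhatᵀ * (C - Chat) * A) = (Bhat * Bhatᵀ) * ((C - Chat) * A) := by
        simp only [Matrix.mul_assoc]
      have l2 : B * (Bᵀ * (C - Chat) * A) = (B * Bᵀ) * ((C - Chat) * A) := by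
        simp only [Matrix.mul_assoc]
      rw [l1, l2, hP1, hQ1]
      simp only [Matrix.sub_mul, Matrix.mul_sub, Matrix.one_mul, Matrix.mul_assoc]
      abel
    rw [step1, step2]
    calc ‖B * (Bᵀ * (C - Chat) * A) + (A * Aᵀ - Ahat * Ahatᵀ) * ((C - Chat) * A)‖
        ≤ ‖B * (Bᵀ * (C - Chat) * A)‖ + ‖(A * Aᵀ - Ahat * Ahatᵀ) * ((C - Chat) * A)‖ :=
          norm_add_le _ _
    _ ≤ r + δ / 5 * dd := by
        have h4 : ‖B * (Bᵀ * (C - Chat) * A)‖ = r := by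
          rw [EPB.norm_mul_left_iso hBo]
        have h5 : ‖(A * Aᵀ - Ahat * Ahatᵀ) * ((C - Chat) * A)‖ ≤ δ / 5 * dd := by
          calc ‖(A * Aᵀ - Ahat * Ahatᵀ) * ((C - Chat) * A)‖
              ≤ ‖A * Aᵀ - Ahat * Ahatᵀ‖ * ‖(C - Chat) * A‖ := Matrix.l2_opNorm_mul _ _
          _ ≤ dd * (‖C - Chat‖ * ‖A‖) := by
              apply mul_le_mul_of_nonneg_left (Matrix.l2_opNorm_mul _ _) hd0
          _ ≤ δ / 5 * dd := by
              have hA1 : ‖A‖ ≤ 1 := EPB.norm_B_le_one hAo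
              have hE0 : (0:ℝ) ≤ ‖C - Chat‖ := norm_nonneg _
              nlinarith [hd0, hpert, hA1, hE0, norm_nonneg A,
                mul_nonneg hE0 (norm_nonneg A), mul_le_mul hpert hA1 (norm_nonneg A) (by linarith : (0:ℝ) ≤ δ / 5)]
        linarith
  -- projection difference bound
  have hPP : (A * Aᵀ) * (A * Aᵀ) = A * Aᵀ := by
    rw [Matrix.mul_assoc, ← Matrix.mul_assoc Aᵀ A Aᵀ, hAo, Matrix.one_mul]
  have hQQ : (Ahat * Ahatᵀ) * (Ahat * Ahatᵀ) = Ahat * Ahatᵀ := by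
    rw [Matrix.mul_assoc, ← Matrix.mul_assoc Ahatᵀ Ahat Ahatᵀ, hAhato, Matrix.one_mul]
  have hPt : (A * Aᵀ)ᵀ = A * Aᵀ := by
    rw [Matrix.transpose_mul, Matrix.transpose_transpose]
  have hQt : (Ahat * Ahatᵀ)ᵀ = Ahat * Ahatᵀ := by
    rw [Matrix.transpose_mul, Matrix.transpose_transpose]
  have projb : dd ≤ max ‖(A * Aᵀ) * (1 - Ahat * Ahatᵀ)‖ ‖(1 - A * Aᵀ) * (Ahat * Ahatᵀ)‖ :=
    EPB.proj_diff_norm_le (A * Aᵀ) (Ahat * Ahatᵀ) hPP hPt hQQ hQt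
  have m1 : ‖(1 - A * Aᵀ) * (Ahat * Ahatᵀ)‖ = ‖X₁‖ := by
    have : (1 - A * Aᵀ) * (Ahat * Ahatᵀ) = B * (X₁ * Ahatᵀ) := by
      rw [← hP1, hX₁]; simp only [Matrix.mul_assoc]
    rw [this, EPB.norm_mul_left_iso hBo, EPB.norm_mul_conj_iso hAhato]
  have m2 : ‖(A * Aᵀ) * (1 - Ahat * Ahatᵀ)‖ = ‖X₂‖ := by
    have h1 : (A * Aᵀ) * (1 - Ahat * Ahatᵀ) = A * (X₂ᵀ * Bhatᵀ) := by
      rw [← hQ1, hX₂, Matrix.transpose_mul, Matrix.transpose_transpose]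
      simp only [Matrix.mul_assoc]
    rw [h1, EPB.norm_mul_left_iso hAo, EPB.norm_mul_conj_iso hBhato, EPB.norm_transpose]
  -- final arithmetic
  have key : 4 * δ / 5 * dd ≤ r + δ / 5 * dd := by
    rcases le_total ‖X₂‖ ‖X₁‖ with h | h
    · have hmax : max ‖(A * Aᵀ) * (1 - Ahat * Ahatᵀ)‖ ‖(1 - A * Aᵀ) * (Ahat * Ahatᵀ)‖
          = ‖X₁‖ := by rw [m1, m2]; exact max_eq_right h
      rw [hmax] at projb
      have := mul_le_mul_of_nonneg_left projb hγnn
      calc 4 * δ / 5 * dd ≤ 4 * δ / 5 * ‖X₁‖ := this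
      _ ≤ ‖Bᵀ * (Chat - C) * Ahat‖ := syl1
      _ ≤ r + δ / 5 * dd := n1
    · have hmax : max ‖(A * Aᵀ) * (1 - Ahat * Ahatᵀ)‖ ‖(1 - A * Aᵀ) * (Ahat * Ahatᵀ)‖
          = ‖X₂‖ := by rw [m1, m2]; exact max_eq_left h
      rw [hmax] at projb
      have := mul_le_mul_of_nonneg_left projb hγnn
      calc 4 * δ / 5 * dd ≤ 4 * δ / 5 * ‖X₂‖ := this
      _ ≤ ‖Bhatᵀ * (C - Chat) * A‖ := syl2
      _ ≤ r + δ / 5 * dd := n2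
  rw [div_mul_eq_mul_div, le_div_iff₀ hδ]
  nlinarith [key, hr0, hd0, hδ]
end
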